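/- (Apolarity Lemma, forward direction.) Let f ∈ ℂ[x,y]_d and let β_1, …, β_r ∈ ℂ be pairwise distinct with 1 ≤ r ≤ d+1. If there exist λ_1, …, λ_r ∈ ℂ such that f(x,y) = Σ_{k=1}^{r} λ_k (x+β_k y)^d, then ∏_{ℓ=1}^{r} (∂y − β_ℓ ∂x) ∘ f = 0. -/

import Mathlib

open MvPolynomial

/-- The linear form `x + β y` in `ℂ[x,y]`. -/
noncomputable def linForm (β : ℂ) : MvPolynomial (Fin 2) ℂ := X 0 + C β * X 1

/-- The first-order differential operator `∂y − β ∂x` acting on `ℂ[x,y]`. -/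
noncomputable def Dop (β : ℂ) : Module.End ℂ (MvPolynomial (Fin 2) ℂ) :=
  (pderiv (1 : Fin 2)).toLinearMap - β • (pderiv (0 : Fin 2)).toLinearMap

lemma Dop_C (γ c : ℂ) : Dop γ (C c : MvPolynomial (Fin 2) ℂ) = 0 := by
  simp [Dop]

lemma Dop_pow (γ α c : ℂ) (n : ℕ) :
    Dop γ (C c * linForm α ^ (n + 1)) = C (c * (n + 1) * (α - γ)) * linForm α ^ n := by
  have h1 : pderiv (1 : Fin 2) (linForm α) = C α := by simp [linForm]
  have h0 : pderiv (0 : Fin 2) (linForm α) = 1 := by simp [linForm]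
  simp only [Dop, LinearMap.sub_apply, LinearMap.smul_apply, Derivation.coeFn_coe,
    pderiv_C_mul, pderiv_pow, h1, h0, smul_eq_C_mul]
  push_cast
  ring_nf
  simp only [map_mul, map_add, map_sub, map_one, map_natCast]
  ring

lemma prod_form (L : List ℂ) (α c : ℂ) (n : ℕ) :
    ∃ c' m, (L.map Dop).prod (C c * linForm α ^ n) = C c' * linForm α ^ m := by
  induction L generalizing c n with
  | nil => exact ⟨c, n, by simp⟩
  | cons γ t ih =>
    obtain ⟨c', m, hm⟩ := ih c n
    rw [List.map_cons, List.prod_cons, Module.End.mul_apply, hm]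
    cases m with
    | zero => exact ⟨0, 0, by simp [Dop_C]⟩
    | succ k => exact ⟨_, k, Dop_pow γ α c' k⟩

lemma prod_kill (L : List ℂ) (α c : ℂ) (n : ℕ) (hα : α ∈ L) :
    (L.map Dop).prod (C c * linForm α ^ n) = 0 := by
  induction L generalizing c n with
  | nil => simp at hα
  | cons γ t ih =>
    rw [List.map_cons, List.prod_cons, Module.End.mul_apply]
    by_cases h : α ∈ t
    · rw [ih c n h, map_zero]
    · have hγ : γ = α := by
        rcases List.mem_cons.mp hα with h' | h'
        · exact h'.symm
        · exact absurd h' h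
      subst hγ
      obtain ⟨c', m, hm⟩ := prod_form t γ c n
      rw [hm]
      cases m with
      | zero => simpa using Dop_C γ c'
      | succ k => rw [Dop_pow]; simp

/-- (Apolarity Lemma, forward direction.) If `f ∈ ℂ[x,y]_d` can be written as
`Σ_{k=1}^{r} λ_k (x+β_k y)^d` with `β_1, …, β_r` pairwise distinct and `1 ≤ r ≤ d+1`, then
`∏_{ℓ=1}^{r} (∂y − β_ℓ ∂x) ∘ f = 0`. -/
theorem apolarity_forward (d r : ℕ) (hr : 1 ≤ r) (hrd : r ≤ d + 1)
    (f : MvPolynomial (Fin 2) ℂ) (hf : f.IsHomogeneous d)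
    (β : Fin r → ℂ) (hβ : Function.Injective β) (lam : Fin r → ℂ)
    (hsum : f = ∑ k, C (lam k) * (linForm (β k)) ^ d) :
    (List.ofFn fun ℓ : Fin r => Dop (β ℓ)).prod f = 0 := by
  have hL : (List.ofFn fun ℓ : Fin r => Dop (β ℓ)) = (List.ofFn β).map Dop := by
    rw [List.map_ofFn]; rfl
  rw [hsum, hL, map_sum]
  refine Finset.sum_eq_zero fun k _ => ?_
  exact prod_kill _ _ _ _ (List.mem_ofFn.mpr ⟨k, rfl⟩)
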